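/- arXiv:2302.01873 — 5 statements merged into one kernel-verified Lean document; each statement's English description precedes it below -/
import Mathlib

section
/- Let C be a Hermitian operator and D any operator on a finite-dimensional complex Hilbert space, let O be a bounded operator, and let |φ⟩ be a unit vector. If ‖C − D‖ ≤ ‖C|φ⟩‖₂ (operator norm on the left, vector 2-norm on the right), then |⟨φ|D† O D|φ⟩ − ⟨φ|C O C|φ⟩| ≤ 3 ‖C|φ⟩‖₂ ‖C − D‖ ‖O‖. -/
open Matrix
open scoped Matrix.Norms.L2Operator

/-- Euclidean norm of a complex vector. -/
noncomputable def vecNorm {n : Type*} [Fintype n] (v : n → ℂ) : ℝ :=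
  Real.sqrt (star v ⬝ᵥ v).re

lemma vecNorm_eq {N : ℕ} (v : Fin N → ℂ) :
    vecNorm v = ‖(EuclideanSpace.equiv (Fin N) ℂ).symm v‖ := by
  rw [vecNorm, EuclideanSpace.norm_eq]
  congr 1
  simp [dotProduct, Complex.mul_conj', Complex.normSq_eq_norm_sq]
  refine Finset.sum_congr rfl fun i _ => ?_
  rw [Complex.sq_norm, Complex.normSq_apply]

lemma dot_le {N : ℕ} (a b : Fin N → ℂ) :
    ‖star a ⬝ᵥ b‖ ≤ vecNorm a * vecNorm b := by
  have := @norm_inner_le_norm ℂ (EuclideanSpace ℂ (Fin N)) _ _ _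
    ((EuclideanSpace.equiv (Fin N) ℂ).symm a) ((EuclideanSpace.equiv (Fin N) ℂ).symm b)
  rw [PiLp.inner_apply] at this
  simpa [vecNorm_eq, dotProduct, mul_comm] using this

lemma mulVec_le {N : ℕ} (A : Matrix (Fin N) (Fin N) ℂ) (v : Fin N → ℂ) :
    vecNorm (A.mulVec v) ≤ ‖A‖ * vecNorm v := by
  simpa [vecNorm_eq] using A.l2_opNorm_mulVec ((EuclideanSpace.equiv (Fin N) ℂ).symm v)

lemma vecNorm_nonneg {N : ℕ} (v : Fin N → ℂ) : 0 ≤ vecNorm v := Real.sqrt_nonneg _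

lemma vecNorm_add {N : ℕ} (a b : Fin N → ℂ) :
    vecNorm (a + b) ≤ vecNorm a + vecNorm b := by
  simp only [vecNorm_eq]
  have : (EuclideanSpace.equiv (Fin N) ℂ).symm (a + b)
      = (EuclideanSpace.equiv (Fin N) ℂ).symm a + (EuclideanSpace.equiv (Fin N) ℂ).symm b :=
    map_add _ _ _
  rw [this]; exact norm_add_le _ _

/-- tightness of expectation values for a Hermitian C and arbitrary D. -/
theorem stmt_1 {N : ℕ} (C D O : Matrix (Fin N) (Fin N) ℂ) (hC : C.IsHermitian)
    (φ : Fin N → ℂ) (hφ : vecNorm φ = 1)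
    (h : ‖C - D‖ ≤ vecNorm (C.mulVec φ)) :
    ‖star φ ⬝ᵥ (Dᴴ * O * D).mulVec φ - star φ ⬝ᵥ (C * O * C).mulVec φ‖
      ≤ 3 * vecNorm (C.mulVec φ) * ‖C - D‖ * ‖O‖ := by
  set u := C.mulVec φ with hu
  set v := D.mulVec φ with hv
  have e1 : star φ ⬝ᵥ (Dᴴ * O * D).mulVec φ = star v ⬝ᵥ O.mulVec v := by
    rw [← Matrix.mulVec_mulVec, ← Matrix.mulVec_mulVec, Matrix.dotProduct_mulVec (star φ) Dᴴ,
      ← Matrix.star_mulVec]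
  have e2 : star φ ⬝ᵥ (C * O * C).mulVec φ = star u ⬝ᵥ O.mulVec u := by
    rw [← Matrix.mulVec_mulVec, ← Matrix.mulVec_mulVec, Matrix.dotProduct_mulVec (star φ) C]
    nth_rewrite 1 [← hC]
    rw [← Matrix.star_mulVec]
  have key : star φ ⬝ᵥ (Dᴴ * O * D).mulVec φ - star φ ⬝ᵥ (C * O * C).mulVec φ
      = star (v - u) ⬝ᵥ O.mulVec v + star u ⬝ᵥ O.mulVec (v - u) := by
    rw [e1, e2, star_sub, sub_dotProduct, Matrix.mulVec_sub, dotProduct_sub]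
    ring
  have hvu : vecNorm (v - u) ≤ ‖C - D‖ := by
    have : v - u = (D - C).mulVec φ := by rw [Matrix.sub_mulVec]
    rw [this]
    calc vecNorm ((D - C).mulVec φ) ≤ ‖D - C‖ * vecNorm φ := mulVec_le _ _
      _ = ‖C - D‖ := by rw [hφ, norm_sub_rev]; ring
  have hvn : vecNorm v ≤ 2 * vecNorm u := by
    have : v = u + (v - u) := by ring
    calc vecNorm v = vecNorm (u + (v - u)) := by rw [← this]
      _ ≤ vecNorm u + vecNorm (v - u) := vecNorm_add _ _
      _ ≤ vecNorm u + vecNorm u := by linarith [hvu.trans h]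
      _ = 2 * vecNorm u := by ring
  rw [key]
  have hO := norm_nonneg O
  have hCD := norm_nonneg (C - D)
  have hun := vecNorm_nonneg u
  calc ‖star (v - u) ⬝ᵥ O.mulVec v + star u ⬝ᵥ O.mulVec (v - u)‖
      ≤ ‖star (v - u) ⬝ᵥ O.mulVec v‖ + ‖star u ⬝ᵥ O.mulVec (v - u)‖ :=
        norm_add_le _ _
    _ ≤ vecNorm (v - u) * vecNorm (O.mulVec v) + vecNorm u * vecNorm (O.mulVec (v - u)) := by
        gcongr <;> [exact dot_le _ _; exact dot_le _ _]
    _ ≤ 3 * vecNorm u * ‖C - D‖ * ‖O‖ := by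
        have b1 : vecNorm (O.mulVec v) ≤ ‖O‖ * (2 * vecNorm u) :=
          (mulVec_le _ _).trans (by gcongr)
        have b2 : vecNorm (O.mulVec (v - u)) ≤ ‖O‖ * ‖C - D‖ :=
          (mulVec_le _ _).trans (by gcongr)
        nlinarith [vecNorm_nonneg (v - u), vecNorm_nonneg (O.mulVec v),
          vecNorm_nonneg (O.mulVec (v - u)), mul_nonneg hO hCD]
end

section
/- Let H be a Hermitian operator with eigenvalues E₀ < E₁ ≤ E₂ ≤ … (all E_l ≥ 0), spectral gap satisfying Δ ≤ E₁ − E₀, ground eigenvector |E₀⟩, and let |ψ₀⟩ be a unit vector with γ := |⟨ψ₀|E₀⟩| > 0. For ε ∈ (0,1] and τ ≥ (1/Δ)·√(2 log(1/(εγ))), define |ψ̃⟩ = e^{−τ²H²/2}|ψ₀⟩ and |ψ⟩ = |ψ̃⟩/‖|ψ̃⟩‖. Then 1 − |⟨ψ|E₀⟩| ≤ ε²/2. -/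
open Matrix
open scoped Matrix.Norms.L2Operator ComplexOrder

namespace Stmt4Aux

variable {N : ℕ}

noncomputable def toE (x : Fin N → ℂ) : EuclideanSpace ℂ (Fin N) :=
  (WithLp.equiv 2 (Fin N → ℂ)).symm x

lemma inner_toE (x y : Fin N → ℂ) :
    (inner ℂ (toE x) (toE y) : ℂ) = star x ⬝ᵥ y := by
  show inner ℂ (WithLp.toLp 2 x) (WithLp.toLp 2 y) = _
  rw [EuclideanSpace.inner_toLp_toLp, dotProduct_comm]

lemma vecNorm_eq (x : Fin N → ℂ) : vecNorm x = ‖toE x‖ := by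
  rw [vecNorm, EuclideanSpace.norm_eq]
  congr 1
  have : (star x ⬝ᵥ x) = ∑ i, (starRingEnd ℂ) (x i) * x i := rfl
  rw [this, Complex.re_sum]
  refine Finset.sum_congr rfl fun i _ => ?_
  show ((starRingEnd ℂ) (x i) * x i).re = ‖x i‖ ^ 2
  rw [← Complex.normSq_eq_conj_mul_self, Complex.ofReal_re,
    Complex.sq_norm]

lemma exp_mulVec_eig (M : Matrix (Fin N) (Fin N) ℂ) (x : Fin N → ℂ) (μ : ℂ)
    (h : M *ᵥ x = μ • x) :
    (NormedSpace.exp M) *ᵥ x = Complex.exp μ • x := by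
  have hpow : ∀ n : ℕ, (M ^ n) *ᵥ x = μ ^ n • x := by
    intro n
    induction n with
    | zero => simp [Matrix.one_mulVec]
    | succ n ih =>
      rw [pow_succ, ← Matrix.mulVec_mulVec, h, Matrix.mulVec_smul, ih, smul_smul, pow_succ,
        mul_comm]
  let L : Matrix (Fin N) (Fin N) ℂ →ₗ[ℂ] (Fin N → ℂ) :=
    { toFun := fun A => A *ᵥ x
      map_add' := fun A B => Matrix.add_mulVec A B x
      map_smul' := fun a A => Matrix.smul_mulVec a A x }
  let Lc : Matrix (Fin N) (Fin N) ℂ →L[ℂ] (Fin N → ℂ) := LinearMap.toContinuousLinearMap L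
  have hL : (NormedSpace.exp M) *ᵥ x = Lc (NormedSpace.exp M) := rfl
  rw [hL, NormedSpace.exp_eq_tsum ℂ,
    Lc.map_tsum (NormedSpace.expSeries_summable' (𝕂 := ℂ) M)]
  have hterm : ∀ n : ℕ, Lc ((n.factorial : ℂ)⁻¹ • M ^ n) = ((n.factorial : ℂ)⁻¹ • μ ^ n) • x := by
    intro n
    show ((n.factorial : ℂ)⁻¹ • M ^ n) *ᵥ x = _
    rw [Matrix.smul_mulVec, hpow, smul_smul, smul_eq_mul]
  rw [tsum_congr hterm, (NormedSpace.expSeries_summable' (𝕂 := ℂ) μ).tsum_smul_const,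
    show (∑' n : ℕ, ((n.factorial : ℂ))⁻¹ • μ ^ n) = NormedSpace.exp μ from
      (congrFun (NormedSpace.exp_eq_tsum ℂ) μ).symm, ← Complex.exp_eq_exp_ℂ]

lemma parseval (b : OrthonormalBasis (Fin N) ℂ (EuclideanSpace ℂ (Fin N))) (x : Fin N → ℂ) :
    vecNorm x ^ 2 = ∑ j, ‖star (⇑(b j)) ⬝ᵥ x‖ ^ 2 := by
  rw [vecNorm_eq, ← b.repr.norm_map (toE x), EuclideanSpace.norm_eq,
    Real.sq_sqrt (by positivity)]
  refine Finset.sum_congr rfl fun j _ => ?_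
  congr 1
  rw [b.repr_apply_apply]
  exact congrArg norm (inner_toE _ x)

end Stmt4Aux

set_option maxHeartbeats 1000000 in
/-- Gaussian ground-state projection: for a Hermitian PSD matrix H with
nondegenerate ground eigenvalue E₀ and spectral gap at least Δ, a trial state ψ₀ with
ground overlap γ > 0, and τ ≥ (1/Δ)√(2 log(1/(εγ))), the normalized state
ψ = e^{−τ²H²/2}ψ₀ / ‖e^{−τ²H²/2}ψ₀‖ satisfies 1 − |⟨ψ|E₀⟩| ≤ ε²/2. -/
theorem stmt_4 {N : ℕ} (H : Matrix (Fin N) (Fin N) ℂ) (hH : H.IsHermitian)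
    (hpos : H.PosSemidef)
    (E₀ Δ ε τ γ : ℝ) (hΔ : 0 < Δ)
    (v : Fin N → ℂ) (hv : vecNorm v = 1) (hEv : H.mulVec v = (E₀ : ℂ) • v)
    (hE₀ : 0 ≤ E₀)
    (hgap : ∀ (μ : ℝ) (w : Fin N → ℂ), w ≠ 0 → H.mulVec w = (μ : ℂ) • w →
      star v ⬝ᵥ w = 0 → E₀ + Δ ≤ μ)
    (ψ₀ : Fin N → ℂ) (hψ₀ : vecNorm ψ₀ = 1)
    (hγ : γ = ‖star ψ₀ ⬝ᵥ v‖) (hγpos : 0 < γ)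
    (hε : 0 < ε) (hε1 : ε ≤ 1)
    (hτ : (1 / Δ) * Real.sqrt (2 * Real.log (1 / (ε * γ))) ≤ τ)
    (ψt : Fin N → ℂ)
    (hψt : ψt = (NormedSpace.exp (-((τ ^ 2 / 2 : ℝ) : ℂ) • (H * H))).mulVec ψ₀) :
    1 - ‖star ψt ⬝ᵥ v‖ / vecNorm ψt ≤ ε ^ 2 / 2 := by
  classical
  set M : Matrix (Fin N) (Fin N) ℂ := -((τ ^ 2 / 2 : ℝ) : ℂ) • (H * H) with hMdef
  have hExpEig : ∀ (x : Fin N → ℂ) (μ : ℝ), H *ᵥ x = (μ : ℂ) • x →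
      (NormedSpace.exp M) *ᵥ x = ((Real.exp (-(τ ^ 2 / 2 * μ ^ 2)) : ℝ) : ℂ) • x := by
    intro x μ hx
    have h2 : M *ᵥ x = ((-(τ ^ 2 / 2 * μ ^ 2) : ℝ) : ℂ) • x := by
      rw [hMdef, Matrix.smul_mulVec, ← Matrix.mulVec_mulVec, hx, Matrix.mulVec_smul, hx,
        smul_smul, smul_smul]
      congr 1
      push_cast
      ring
    rw [Stmt4Aux.exp_mulVec_eig M x _ h2, Complex.ofReal_exp]
  have hMH : M.IsHermitian := by
    show Mᴴ = M
    rw [hMdef, Matrix.conjTranspose_smul, Matrix.conjTranspose_mul, hH.eq]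
    congr 1
    simp
  have hAH : (NormedSpace.exp M).IsHermitian := by
    show _ᴴ = _
    rw [← Matrix.exp_conjTranspose, hMH.eq]
  have hψtv : star ψt ⬝ᵥ v = ((Real.exp (-(τ ^ 2 / 2 * E₀ ^ 2)) : ℝ) : ℂ) * (star ψ₀ ⬝ᵥ v) := by
    rw [hψt, Matrix.star_mulVec, hAH.eq, ← Matrix.dotProduct_mulVec, hExpEig v E₀ hEv,
      dotProduct_smul, smul_eq_mul]
  set ea := Real.exp (-(τ ^ 2 / 2 * E₀ ^ 2)) with headef
  set eb := Real.exp (-(τ ^ 2 / 2 * (E₀ + Δ) ^ 2)) with hebdef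
  have hea : 0 < ea := Real.exp_pos _
  have heb : 0 < eb := Real.exp_pos _
  have habs : ‖star ψt ⬝ᵥ v‖ = ea * γ := by
    rw [hψtv, norm_mul, Complex.norm_of_nonneg hea.le, hγ]
  -- eigenbasis
  set b := hH.eigenvectorBasis with hbdef
  set lam := hH.eigenvalues with hlamdef
  have hbvec : ∀ j, H *ᵥ ⇑(b j) = ((lam j : ℝ) : ℂ) • ⇑(b j) := by
    intro j
    rw [hbdef, hlamdef, hH.mulVec_eigenvectorBasis]
    ext i
    simp [Complex.real_smul]
  have hbne : ∀ j, (⇑(b j) : Fin N → ℂ) ≠ 0 := by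
    intro j h0
    exact b.orthonormal.ne_zero j (by ext i; simpa using congrFun h0 i)
  have htj : ∀ j, star (⇑(b j)) ⬝ᵥ ψt
      = ((Real.exp (-(τ ^ 2 / 2 * (lam j) ^ 2)) : ℝ) : ℂ) * (star (⇑(b j)) ⬝ᵥ ψ₀) := by
    intro j
    conv_lhs => rw [hψt, Matrix.dotProduct_mulVec, ← hAH.eq, ← Matrix.star_mulVec,
      hExpEig _ (lam j) (hbvec j)]
    rw [star_smul, smul_dotProduct, smul_eq_mul, RCLike.star_def, Complex.conj_ofReal]
  have hnorm_t : ∀ j, ‖star (⇑(b j)) ⬝ᵥ ψt‖ ^ 2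
      = (Real.exp (-(τ ^ 2 / 2 * (lam j) ^ 2))) ^ 2 * ‖star (⇑(b j)) ⬝ᵥ ψ₀‖ ^ 2 := by
    intro j
    rw [htj j, norm_mul, mul_pow, Complex.norm_of_nonneg (Real.exp_pos _).le]
  have hvE : ‖Stmt4Aux.toE v‖ = 1 := by rw [← Stmt4Aux.vecNorm_eq]; exact hv
  have hvv : star v ⬝ᵥ v = 1 := by
    rw [← Stmt4Aux.inner_toE, inner_self_eq_norm_sq_to_K, hvE]
    norm_num
  have hkey : ∀ j, ‖star (⇑(b j)) ⬝ᵥ ψt‖ ^ 2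
      ≤ ea ^ 2 * γ ^ 2 * ‖star v ⬝ᵥ ⇑(b j)‖ ^ 2 + eb ^ 2 * ‖star (⇑(b j)) ⬝ᵥ ψ₀‖ ^ 2 := by
    intro j
    by_cases hvb : star v ⬝ᵥ ⇑(b j) = 0
    · have hlamge : E₀ + Δ ≤ lam j := hgap (lam j) _ (hbne j) (hbvec j) hvb
      have h1 : Real.exp (-(τ ^ 2 / 2 * (lam j) ^ 2)) ≤ eb := by
        rw [hebdef]
        apply Real.exp_le_exp.2
        have h9 : (E₀ + Δ) ^ 2 ≤ (lam j) ^ 2 := by nlinarith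
        have h10 := mul_le_mul_of_nonneg_left h9 (by positivity : (0:ℝ) ≤ τ ^ 2 / 2)
        linarith
      have h2 : (Real.exp (-(τ ^ 2 / 2 * (lam j) ^ 2))) ^ 2 ≤ eb ^ 2 :=
        pow_le_pow_left₀ (Real.exp_pos _).le h1 2
      rw [hnorm_t j, hvb]
      simp only [norm_zero]
      have h3 := mul_le_mul_of_nonneg_right h2 (sq_nonneg ‖star (⇑(b j)) ⬝ᵥ ψ₀‖)
      nlinarith [sq_nonneg (ea * γ)]
    · -- the ground-state direction
      set s := star v ⬝ᵥ ⇑(b j) with hsdef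
      have h3 : star v ⬝ᵥ (H *ᵥ ⇑(b j)) = ((lam j : ℝ) : ℂ) * s := by
        rw [hbvec j, dotProduct_smul, smul_eq_mul]
      have h2 : star v ⬝ᵥ (H *ᵥ ⇑(b j)) = ((E₀ : ℝ) : ℂ) * s := by
        rw [Matrix.dotProduct_mulVec,
          show star v ᵥ* H = star (H *ᵥ v) from by rw [Matrix.star_mulVec, hH.eq], hEv,
          star_smul, smul_dotProduct, smul_eq_mul, RCLike.star_def, Complex.conj_ofReal]
      have hlameq : lam j = E₀ := by
        have h4 : ((lam j : ℝ) : ℂ) = ((E₀ : ℝ) : ℂ) := mul_right_cancel₀ hvb (h3.symm.trans h2)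
        exact_mod_cast h4
      have hw : ⇑(b j) = s • v := by
        by_contra hne
        have hw0 : ⇑(b j) - s • v ≠ 0 := sub_ne_zero.2 hne
        have hweig : H *ᵥ (⇑(b j) - s • v) = ((E₀ : ℝ) : ℂ) • (⇑(b j) - s • v) := by
          rw [Matrix.mulVec_sub, Matrix.mulVec_smul, hbvec j, hlameq, hEv]
          ext i
          simp only [Pi.sub_apply, Pi.smul_apply, smul_eq_mul]
          ring
        have hworth : star v ⬝ᵥ (⇑(b j) - s • v) = 0 := by
          rw [dotProduct_sub, dotProduct_smul, hvv, smul_eq_mul, mul_one, sub_self]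
        have := hgap E₀ _ hw0 hweig hworth
        linarith
      have hcj : star (⇑(b j)) ⬝ᵥ ψ₀ = star s * (star v ⬝ᵥ ψ₀) := by
        conv_lhs => rw [hw]
        rw [star_smul, smul_dotProduct, smul_eq_mul]
      have hvψ : ‖star v ⬝ᵥ ψ₀‖ = γ := by
        rw [Matrix.star_dotProduct, norm_star, ← hγ]
      have hcjn : ‖star (⇑(b j)) ⬝ᵥ ψ₀‖ ^ 2 = ‖s‖ ^ 2 * γ ^ 2 := by
        rw [hcj, norm_mul, norm_star, hvψ, mul_pow]
      rw [hnorm_t j, hlameq, hcjn, ← headef]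
      nlinarith [sq_nonneg (eb * (‖s‖ * γ))]
  have hsum : vecNorm ψt ^ 2 ≤ ea ^ 2 * γ ^ 2 + eb ^ 2 := by
    have h2 : ∑ j, ‖star (⇑(b j)) ⬝ᵥ ψ₀‖ ^ 2 = 1 := by
      rw [← Stmt4Aux.parseval b ψ₀, hψ₀]
      norm_num
    have h3 : ∑ j, ‖star v ⬝ᵥ ⇑(b j)‖ ^ 2 = 1 := by
      have heq : ∀ j, ‖star v ⬝ᵥ ⇑(b j)‖ = ‖star (⇑(b j)) ⬝ᵥ v‖ := by
        intro j
        rw [Matrix.star_dotProduct, norm_star]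
      simp_rw [heq]
      rw [← Stmt4Aux.parseval b v, hv]
      norm_num
    calc vecNorm ψt ^ 2 = ∑ j, ‖star (⇑(b j)) ⬝ᵥ ψt‖ ^ 2 := Stmt4Aux.parseval b ψt
      _ ≤ ∑ j, (ea ^ 2 * γ ^ 2 * ‖star v ⬝ᵥ ⇑(b j)‖ ^ 2 + eb ^ 2 * ‖star (⇑(b j)) ⬝ᵥ ψ₀‖ ^ 2) :=
          Finset.sum_le_sum fun j _ => hkey j
      _ = ea ^ 2 * γ ^ 2 * ∑ j, ‖star v ⬝ᵥ ⇑(b j)‖ ^ 2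
          + eb ^ 2 * ∑ j, ‖star (⇑(b j)) ⬝ᵥ ψ₀‖ ^ 2 := by
          rw [Finset.sum_add_distrib, ← Finset.mul_sum, ← Finset.mul_sum]
      _ = ea ^ 2 * γ ^ 2 + eb ^ 2 := by rw [h2, h3]; ring
  -- the exponential estimate
  have hεγ : 0 < ε * γ := mul_pos hε hγpos
  have hebb : eb ≤ ea * (ε * γ) := by
    have hL : 2 * Real.log (1 / (ε * γ)) ≤ τ ^ 2 * Δ ^ 2 := by
      rcases le_or_gt (2 * Real.log (1 / (ε * γ))) 0 with h | h
      · nlinarith [sq_nonneg τ, sq_nonneg Δ, sq_nonneg (τ * Δ)]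
      · have hs := Real.sq_sqrt h.le
        have h5 : Real.sqrt (2 * Real.log (1 / (ε * γ))) ≤ τ * Δ := by
          rw [div_mul_eq_mul_div, one_mul, div_le_iff₀ hΔ] at hτ
          linarith
        have h6 := mul_self_le_mul_self (Real.sqrt_nonneg (2 * Real.log (1 / (ε * γ)))) h5
        nlinarith [hs]
    rw [hebdef, headef, show ε * γ = Real.exp (Real.log (ε * γ)) from (Real.exp_log hεγ).symm,
      ← Real.exp_add]
    apply Real.exp_le_exp.2
    have hlog1 : Real.log (1 / (ε * γ)) = - Real.log (ε * γ) := by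
      rw [one_div, Real.log_inv]
    rw [hlog1] at hL
    nlinarith [sq_nonneg τ, mul_nonneg (mul_nonneg (sq_nonneg τ) hE₀) hΔ.le]
  -- Cauchy-Schwarz and positivity
  have hn_pos : 0 < ‖star ψt ⬝ᵥ v‖ := by
    rw [habs]
    positivity
  have hnm : ‖star ψt ⬝ᵥ v‖ ≤ vecNorm ψt := by
    rw [← Stmt4Aux.inner_toE, Stmt4Aux.vecNorm_eq]
    calc ‖(inner ℂ (Stmt4Aux.toE ψt) (Stmt4Aux.toE v) : ℂ)‖
        ≤ ‖Stmt4Aux.toE ψt‖ * ‖Stmt4Aux.toE v‖ := norm_inner_le_norm _ _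
      _ = ‖Stmt4Aux.toE ψt‖ := by rw [hvE, mul_one]
  have hm_pos : 0 < vecNorm ψt := lt_of_lt_of_le hn_pos hnm
  have hm2 : vecNorm ψt ^ 2 ≤ (ea * γ) ^ 2 * (1 + ε ^ 2) := by
    have h6 : eb ^ 2 ≤ (ea * (ε * γ)) ^ 2 := pow_le_pow_left₀ heb.le hebb 2
    nlinarith
  have hfrac : 1 - ε ^ 2 / 2 ≤ ‖star ψt ⬝ᵥ v‖ / vecNorm ψt := by
    rw [le_div_iff₀ hm_pos]
    have he2 : ε ^ 2 ≤ 1 := by nlinarith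
    have he6 : ε ^ 4 * ε ^ 2 ≤ ε ^ 4 * 1 := mul_le_mul_of_nonneg_left he2 (by positivity)
    have h7 : (1 - ε ^ 2 / 2) ^ 2 * (1 + ε ^ 2) ≤ 1 := by nlinarith [pow_nonneg hε.le 4]
    have hq : ((1 - ε ^ 2 / 2) * vecNorm ψt) ^ 2 ≤ (‖star ψt ⬝ᵥ v‖) ^ 2 := by
      rw [habs]
      nlinarith [mul_le_mul_of_nonneg_left hm2 (sq_nonneg (1 - ε ^ 2 / 2)), sq_nonneg (ea * γ)]
    have h8 : 0 ≤ (1 - ε ^ 2 / 2) * vecNorm ψt :=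
      mul_nonneg (by nlinarith) hm_pos.le
    calc (1 - ε ^ 2 / 2) * vecNorm ψt
        = Real.sqrt (((1 - ε ^ 2 / 2) * vecNorm ψt) ^ 2) := (Real.sqrt_sq h8).symm
      _ ≤ Real.sqrt ((‖star ψt ⬝ᵥ v‖) ^ 2) := Real.sqrt_le_sqrt hq
      _ = ‖star ψt ⬝ᵥ v‖ := Real.sqrt_sq hn_pos.le
  linarith
end

section
/- For every x ≠ 0, (i/√(2π)) ∫₀^∞ ∫_{−∞}^{∞} z e^{−z²/2} e^{−ixyz} dz dy = 1/x. -/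
open MeasureTheory Real Complex

noncomputable section

lemma inner_int (a : ℝ) :
    ∫ z : ℝ, (z : ℂ) * Complex.exp (-(z : ℂ) ^ 2 / 2) * Complex.exp (-Complex.I * a * z)
      = -Complex.I * a * Real.sqrt (2 * Real.pi) * Complex.exp (-(a : ℂ) ^ 2 / 2) := by
  set F : ℝ → ℂ := fun z => Complex.exp (-(z : ℂ) ^ 2 / 2 - Complex.I * a * z) with hF
  have hFeq : ∀ z : ℝ, F z =
      Complex.exp ((-(1/2) : ℂ) * z ^ 2 + (-Complex.I * a) * z + 0) := by
    intro z; rw [hF]; ring_nf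
  have hFint : Integrable F := by
    simp_rw [funext hFeq]
    exact integrable_cexp_quadratic' (by norm_num) _ _
  have hderiv : ∀ z : ℝ, HasDerivAt F ((-(z:ℂ) - Complex.I * a) * F z) z := by
    intro z
    have h1 : HasDerivAt (fun w : ℂ => Complex.exp (-w ^ 2 / 2 - Complex.I * a * w))
        ((-(z:ℂ) - Complex.I * a) * Complex.exp (-(z:ℂ) ^ 2 / 2 - Complex.I * a * z)) z := by
      have h2 : HasDerivAt (fun w : ℂ => -w ^ 2 / 2 - Complex.I * a * w)
          (-(z:ℂ) - Complex.I * a) z := by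
        have := (((hasDerivAt_pow 2 (z:ℂ)).neg.div_const 2).sub
          ((hasDerivAt_id (z:ℂ)).const_mul (Complex.I * a)))
        exact this.congr_deriv (by rw [show (2:ℕ) - 1 = 1 from rfl]; push_cast; ring)
      simpa [mul_comm] using h2.cexp
    exact h1.comp_ofReal
  have g1 : Integrable (fun z : ℝ => |z| * Real.exp (-(1/2) * z ^ 2)) := by
    refine ((integrable_mul_exp_neg_mul_sq (by norm_num : (0:ℝ) < 1/2)).abs).congr
      (Filter.Eventually.of_forall fun z => ?_)
    simp [abs_mul, Real.abs_exp]
  have g2 : Integrable (fun z : ℝ => |a| * Real.exp (-(1/2) * z ^ 2)) :=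
    (integrable_exp_neg_mul_sq (by norm_num : (0:ℝ) < 1/2)).const_mul _
  have hre : ∀ z : ℝ, (-(z:ℂ) ^ 2 / 2 - Complex.I * a * z).re = -(1/2) * z ^ 2 := by
    intro z
    have : (-(z:ℂ) ^ 2 / 2 - Complex.I * a * z)
        = ((-(1/2) * z ^ 2 : ℝ) : ℂ) + ((-(a * z) : ℝ) : ℂ) * Complex.I := by
      push_cast; ring
    rw [this]
    simp [← Complex.ofReal_pow]
  have hF'int : Integrable (fun z : ℝ => (-(z:ℂ) - Complex.I * a) * F z) := by
    refine Integrable.mono' (g1.add g2) ?_ ?_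
    · exact ((Complex.continuous_ofReal.neg.sub continuous_const).mul
        (Complex.continuous_exp.comp (by continuity))).aestronglyMeasurable
    · refine Filter.Eventually.of_forall fun z => ?_
      simp only [Pi.add_apply]
      rw [norm_mul, hF]
      simp only [Complex.norm_exp, hre]
      rw [show |z| * Real.exp (-(1/2) * z ^ 2) + |a| * Real.exp (-(1/2) * z ^ 2)
        = (|z| + |a|) * Real.exp (-(1/2) * z ^ 2) by ring]
      refine mul_le_mul_of_nonneg_right ?_ (Real.exp_pos _).le
      calc ‖-(z:ℂ) - Complex.I * a‖
          ≤ ‖-(z:ℂ)‖ + ‖Complex.I * (a:ℂ)‖ := by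
            simpa [sub_eq_add_neg] using norm_add_le (-(z:ℂ)) (-(Complex.I * (a:ℂ)))
        _ = |z| + |a| := by simp
  have hzero : ∫ z : ℝ, (-(z:ℂ) - Complex.I * a) * F z = 0 :=
    integral_eq_zero_of_hasDerivAt_of_integrable hderiv hF'int hFint
  have hFval : ∫ z : ℝ, F z = Real.sqrt (2 * Real.pi) * Complex.exp (-(a : ℂ) ^ 2 / 2) := by
    simp_rw [funext hFeq]
    rw [integral_cexp_quadratic (by norm_num : ((-(1/2) : ℂ)).re < 0)]
    congr 1
    · rw [show ((Real.pi : ℂ) / -(-(1/2))) = ((2 * Real.pi : ℝ) : ℂ) by push_cast; ring,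
        Real.sqrt_eq_rpow, Complex.ofReal_cpow (by positivity)]
      norm_num
    · congr 1
      have : (Complex.I * (a:ℂ)) ^ 2 = -(a:ℂ) ^ 2 := by
        rw [mul_pow, Complex.I_sq]; ring
      field_simp
      ring_nf
      rw [Complex.I_sq]
      ring
  have key : ∀ z : ℝ, (z : ℂ) * Complex.exp (-(z : ℂ) ^ 2 / 2) * Complex.exp (-Complex.I * a * z)
      = -((-(z:ℂ) - Complex.I * a) * F z) + (-Complex.I * a) * F z := by
    intro z
    have he : Complex.exp (-(z:ℂ) ^ 2 / 2) * Complex.exp (-Complex.I * a * z) = F z := by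
      rw [hF, ← Complex.exp_add]
      congr 1; ring
    rw [mul_assoc, he, hF]
    ring
  simp_rw [funext key]
  have h3 : Integrable (fun z : ℝ => -((-(z:ℂ) - Complex.I * a) * F z)) := hF'int.neg
  rw [integral_add h3 (hFint.const_mul _), integral_neg, hzero, neg_zero, zero_add,
    integral_const_mul, hFval]
  ring

/-- the exact Fourier-integral representation of the inverse function,
(i/√(2π)) ∫₀^∞ ∫_{−∞}^∞ z e^{−z²/2} e^{−ixyz} dz dy = 1/x for x ≠ 0. -/
theorem stmt_11 (x : ℝ) (hx : x ≠ 0) :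
    (Complex.I / (Real.sqrt (2 * Real.pi) : ℂ)) *
      ∫ y in Set.Ioi (0 : ℝ), ∫ z : ℝ,
        (z : ℂ) * Complex.exp (-(z : ℂ) ^ 2 / 2) * Complex.exp (-Complex.I * x * y * z)
      = 1 / (x : ℂ) := by
  have step1 : ∀ y : ℝ, (∫ z : ℝ,
      (z : ℂ) * Complex.exp (-(z : ℂ) ^ 2 / 2) * Complex.exp (-Complex.I * x * y * z))
      = (-Complex.I * Real.sqrt (2 * Real.pi) * x) *
        ((y : ℂ) * Complex.exp (-((x:ℂ)^2/2) * (y:ℂ) ^ 2)) := by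
    intro y
    have := inner_int (x * y)
    simp_rw [show ∀ z : ℝ, -Complex.I * (((x:ℝ) * y : ℝ) : ℂ) * z = -Complex.I * x * y * z by
      intro z; push_cast; ring] at this
    rw [this, show (-((((x:ℝ) * y : ℝ) : ℂ)) ^ 2 / 2) = -((x:ℂ)^2/2) * (y:ℂ)^2 by
      push_cast; ring]
    ring
  simp_rw [funext step1]
  have hrepos : (0:ℝ) < (((x:ℂ)^2/2)).re := by
    rw [show ((x:ℂ)^2/2) = ((x^2/2 : ℝ) : ℂ) by push_cast; ring, Complex.ofReal_re]
    positivity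
  rw [integral_const_mul, integral_mul_cexp_neg_mul_sq hrepos]
  have h1 : (Real.sqrt (2 * Real.pi) : ℂ) ≠ 0 := by
    simp only [ne_eq, Complex.ofReal_eq_zero, Real.sqrt_eq_zero']
    push_neg
    positivity
  have h2 : (x : ℂ) ≠ 0 := Complex.ofReal_ne_zero.mpr hx
  have ha : ((Real.sqrt 2 : ℝ) : ℂ) ≠ 0 := by
    simp only [ne_eq, Complex.ofReal_eq_zero, Real.sqrt_eq_zero']; push_neg; norm_num
  have hb : ((Real.sqrt Real.pi : ℝ) : ℂ) ≠ 0 := by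
    simp only [ne_eq, Complex.ofReal_eq_zero, Real.sqrt_eq_zero']; push_neg; positivity
  field_simp
  ring_nf
  rw [Complex.I_sq]
  field_simp
end
end

section
/- Let H be a Hermitian operator with eigenvalues E₀ < E₁ ≤ … where E₀ < 0 and E₁ < 0, gap lower bound Δ ≤ E₁ − E₀, ground eigenvector |E₀⟩, and |ψ₀⟩ a unit vector with γ := |⟨E₀|ψ₀⟩| > 0. Then for every k ∈ ℕ, 1 − |⟨E₀| H^k |ψ₀⟩| / ‖H^k|ψ₀⟩‖ ≤ ((1 − γ²)/(2γ²)) · (E₁/E₀)^{2k}. -/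
open Matrix

open Finset

lemma vecNorm_eq_norm {N : ℕ} (x : EuclideanSpace ℂ (Fin N)) :
    vecNorm (x : Fin N → ℂ) = ‖x‖ := by
  rw [@norm_eq_sqrt_re_inner ℂ, EuclideanSpace.inner_eq_star_dotProduct, vecNorm]
  rw [dotProduct_comm]; rfl

lemma dot_eq_inner {N : ℕ} (x y : Fin N → ℂ) :
    star x ⬝ᵥ y = inner ℂ (WithLp.toLp 2 x : EuclideanSpace ℂ (Fin N)) (WithLp.toLp 2 y) := by
  rw [EuclideanSpace.inner_eq_star_dotProduct, dotProduct_comm]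

lemma parseval_abs {N : ℕ} (b : OrthonormalBasis (Fin N) ℂ (EuclideanSpace ℂ (Fin N)))
    (x : EuclideanSpace ℂ (Fin N)) :
    ∑ j, ‖(inner ℂ (b j) x : ℂ)‖ ^ 2 = ‖x‖ ^ 2 := by
  have h1 : ‖b.repr x‖ = ‖x‖ := b.repr.norm_map x
  rw [← h1, EuclideanSpace.norm_eq, Real.sq_sqrt (by positivity)]
  refine Finset.sum_congr rfl fun j _ => ?_
  rw [b.repr_apply_apply]

lemma mulVec_sum_smul {N : ℕ} (M : Matrix (Fin N) (Fin N) ℂ) (d : Fin N → ℂ)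
    (f : Fin N → (Fin N → ℂ)) :
    M *ᵥ (∑ j, d j • f j) = ∑ j, d j • (M *ᵥ f j) := by
  rw [show M *ᵥ (∑ j, d j • f j) = M.mulVecLin (∑ j, d j • f j) from rfl, map_sum]
  exact Finset.sum_congr rfl fun j _ => by rw [_root_.map_smul]; rfl

lemma aux_ineq (n D x : ℝ) (hn : 0 < n) (hD : 0 < D) (hx : 0 ≤ x)
    (h : D^2 ≤ n^2*(1+x)) : 1 - n/D ≤ x/2 := by
  set s := Real.sqrt (1+x) with hs
  have hs1 : 1 ≤ s := by
    have := Real.sqrt_le_sqrt (show (1:ℝ) ≤ 1+x by linarith)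
    simpa [hs] using this
  have hspos : 0 < s := by linarith
  have hssq : s^2 = 1 + x := Real.sq_sqrt (by linarith)
  have hDs : D ≤ n * s := by
    have h' : D^2 ≤ (n*s)^2 := by nlinarith
    have := Real.sqrt_le_sqrt h'
    rwa [Real.sqrt_sq hD.le, Real.sqrt_sq (by positivity)] at this
  have h1 : 1/s ≤ n/D := by
    rw [div_le_div_iff₀ hspos hD]; nlinarith
  have h2 : 1 - (s^2-1)/2 ≤ 1/s := by
    rw [le_div_iff₀ hspos]
    nlinarith [mul_nonneg (sq_nonneg (s-1)) (show (0:ℝ) ≤ s + 2 by linarith)]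
  have hx2 : x = s^2 - 1 := by linarith
  rw [hx2]; linarith

set_option maxHeartbeats 2000000 in
/-- power method overlap bound: for Hermitian H with negative spectrum,
nondegenerate ground eigenvalue E₀ < E₁ < 0 (all non-ground eigenvalues lying in [E₁, 0)),
ground eigenvector v and trial state ψ₀ with overlap γ > 0, one has for every k
1 − |⟨E₀|H^k|ψ₀⟩|/‖H^k ψ₀‖ ≤ ((1 − γ²)/(2γ²))·(E₁/E₀)^{2k}. -/
theorem stmt_13 {N : ℕ} (H : Matrix (Fin N) (Fin N) ℂ) (hH : H.IsHermitian)
    (E₀ E₁ γ : ℝ) (hE₀ : E₀ < 0) (hE₁ : E₁ < 0) (hE₀₁ : E₀ < E₁)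
    (v : Fin N → ℂ) (hv : vecNorm v = 1) (hEv : H.mulVec v = (E₀ : ℂ) • v)
    (hgap : ∀ (μ : ℝ) (w : Fin N → ℂ), w ≠ 0 → H.mulVec w = (μ : ℂ) • w →
      star v ⬝ᵥ w = 0 → E₁ ≤ μ ∧ μ < 0)
    (ψ₀ : Fin N → ℂ) (hψ₀ : vecNorm ψ₀ = 1)
    (hγ : γ = ‖star v ⬝ᵥ ψ₀‖) (hγpos : 0 < γ) (k : ℕ) :
    1 - ‖star v ⬝ᵥ (H ^ k).mulVec ψ₀‖ / vecNorm ((H ^ k).mulVec ψ₀)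
      ≤ ((1 - γ ^ 2) / (2 * γ ^ 2)) * (E₁ / E₀) ^ (2 * k) := by
  classical
  set u := hH.eigenvectorBasis with hu
  set μ := hH.eigenvalues with hμdef
  set v' : EuclideanSpace ℂ (Fin N) := WithLp.toLp 2 v with hv'
  set ψ' : EuclideanSpace ℂ (Fin N) := WithLp.toLp 2 ψ₀ with hψ'
  set a : Fin N → ℂ := fun j => inner ℂ (u j) v' with ha
  set c : Fin N → ℂ := fun j => inner ℂ (u j) ψ' with hc
  have hnormv : ‖v'‖ = 1 := by rw [← vecNorm_eq_norm]; exact hv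
  have hnormψ : ‖ψ'‖ = 1 := by rw [← vecNorm_eq_norm]; exact hψ₀
  have honb := u.orthonormal
  have hite : ∀ i j : Fin N, (inner ℂ (u i) (u j) : ℂ) = if i = j then 1 else 0 :=
    fun i j => orthonormal_iff_ite.mp honb i j
  have heig : ∀ j, H *ᵥ (u j : Fin N → ℂ) = ((μ j : ℂ)) • (u j : Fin N → ℂ) := by
    intro j
    have h1 : H *ᵥ (u j : Fin N → ℂ) = μ j • (u j : Fin N → ℂ) :=
      hH.mulVec_eigenvectorBasis j
    rw [h1]
    funext i
    simp [Pi.smul_apply, Complex.real_smul]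
  clear_value u μ
  have hinner_vu : ∀ j, (inner ℂ v' (u j) : ℂ) = starRingEnd ℂ (a j) := by
    intro j; rw [ha, ← inner_conj_symm]
  have hdotvu : ∀ j, star v ⬝ᵥ (u j : Fin N → ℂ) = starRingEnd ℂ (a j) := by
    intro j; rw [dot_eq_inner]; exact hinner_vu j
  -- a j ≠ 0 → μ j = E₀
  have hμa : ∀ j, a j ≠ 0 → μ j = E₀ := by
    intro j haj
    have e1 : star v ⬝ᵥ (H *ᵥ (u j : Fin N → ℂ)) = (μ j : ℂ) * starRingEnd ℂ (a j) := by
      rw [heig j, dotProduct_smul, hdotvu j]; rfl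
    have hrow : star v ᵥ* H = (E₀:ℂ) • star v := by
      have := star_mulVec (M := H) (v := v)
      rw [hEv, hH.eq] at this
      rw [← this, star_smul]
      simp
    have e2 : star v ⬝ᵥ (H *ᵥ (u j : Fin N → ℂ)) = (E₀ : ℂ) * starRingEnd ℂ (a j) := by
      rw [dotProduct_mulVec, hrow, smul_dotProduct, hdotvu j]; rfl
    have hc0 : starRingEnd ℂ (a j) ≠ 0 := by simpa using haj
    have := mul_right_cancel₀ hc0 (e1.symm.trans e2)
    exact_mod_cast this
  -- Parseval
  have hsum_a : ∑ j, ‖a j‖^2 = 1 := by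
    have := parseval_abs u v'
    rw [hnormv] at this; simpa [ha] using this
  have hsum_c : ∑ j, ‖c j‖^2 = 1 := by
    have := parseval_abs u ψ'
    rw [hnormψ] at this; simpa [hc] using this
  -- existence of i₀
  have hex : ∃ i₀, a i₀ ≠ 0 := by
    by_contra h; push_neg at h
    have : ∑ j, ‖a j‖^2 = 0 :=
      Finset.sum_eq_zero fun j _ => by rw [h j]; simp
    rw [hsum_a] at this; norm_num at this
  obtain ⟨i₀, hi₀⟩ := hex
  have hμi₀ : μ i₀ = E₀ := hμa i₀ hi₀
  -- uniqueness
  have hzero : ∀ j, j ≠ i₀ → a j = 0 := by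
    intro j hj
    by_contra haj
    have hμj : μ j = E₀ := hμa j haj
    set w : Fin N → ℂ := (starRingEnd ℂ (a i₀)) • (u j : Fin N → ℂ)
        - (starRingEnd ℂ (a j)) • (u i₀ : Fin N → ℂ) with hw
    have hiw : (inner ℂ (u j) (WithLp.toLp 2 w : EuclideanSpace ℂ (Fin N)) : ℂ) = starRingEnd ℂ (a i₀) := by
      show (inner ℂ (u j) ((starRingEnd ℂ (a i₀)) • u j - (starRingEnd ℂ (a j)) • u i₀
        : EuclideanSpace ℂ (Fin N)) : ℂ) = starRingEnd ℂ (a i₀)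
      rw [inner_sub_right, inner_smul_right, inner_smul_right, hite j j, hite j i₀]
      simp [hj]
    have hwne : w ≠ 0 := by
      intro h0
      rw [h0] at hiw
      simp only [WithLp.toLp_zero, inner_zero_right] at hiw
      exact hi₀ (by simpa using hiw.symm)
    have hEw : H *ᵥ w = ((E₀:ℂ)) • w := by
      rw [hw, Matrix.mulVec_sub, Matrix.mulVec_smul, Matrix.mulVec_smul, heig j, heig i₀,
        hμj, hμi₀, smul_sub, smul_smul, smul_smul, smul_smul, smul_smul, mul_comm]
      rw [mul_comm ((E₀:ℂ)) (starRingEnd ℂ (a j))]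
    have horth : star v ⬝ᵥ w = 0 := by
      rw [dot_eq_inner]
      show (inner ℂ v' ((starRingEnd ℂ (a i₀)) • u j - (starRingEnd ℂ (a j)) • u i₀
        : EuclideanSpace ℂ (Fin N)) : ℂ) = 0
      rw [inner_sub_right, inner_smul_right, inner_smul_right, hinner_vu j, hinner_vu i₀]
      ring
    obtain ⟨hle, _⟩ := hgap E₀ w hwne hEw horth
    linarith
  -- |a i₀| = 1
  have habs1 : ‖a i₀‖ = 1 := by
    have hsingle : ∑ j, ‖a j‖^2 = ‖a i₀‖^2 :=
      Finset.sum_eq_single i₀ (fun j _ hj => by rw [hzero j hj]; simp)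
        (fun h => absurd (mem_univ i₀) h)
    have h2 : ‖a i₀‖^2 = 1 := by rw [← hsingle, hsum_a]
    nlinarith [norm_nonneg (a i₀)]
  -- γ = |c i₀|
  have hψexp : (ψ₀ : Fin N → ℂ) = ∑ j, c j • (u j : Fin N → ℂ) := by
    have h := congrArg WithLp.ofLp (u.sum_repr' ψ').symm
    rw [WithLp.ofLp_sum] at h
    exact h
  have hvψ : (inner ℂ v' ψ' : ℂ) = starRingEnd ℂ (a i₀) * c i₀ := by
    conv_lhs => rw [show ψ' = ∑ j, c j • u j from (u.sum_repr' ψ').symm]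
    rw [inner_sum]
    simp only [inner_smul_right]
    rw [Finset.sum_eq_single i₀ (fun j _ hj => by rw [hinner_vu j, hzero j hj]; simp)
      (fun h => absurd (mem_univ i₀) h), hinner_vu i₀]
    ring
  have hγc : γ = ‖c i₀‖ := by
    have hd : (star v ⬝ᵥ (ψ₀ : Fin N → ℂ) : ℂ) = (inner ℂ v' ψ' : ℂ) := dot_eq_inner v ψ₀
    rw [hγ, hd, hvψ, norm_mul, Complex.norm_conj, habs1, one_mul]
  -- power action
  have hpow : ∀ (m : ℕ) j, (H^m) *ᵥ (u j : Fin N → ℂ) = ((μ j:ℂ)^m) • (u j : Fin N → ℂ) := by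
    intro m j
    induction m with
    | zero => simp [Matrix.one_mulVec]
    | succ m ih =>
      rw [pow_succ, ← Matrix.mulVec_mulVec, heig j, Matrix.mulVec_smul, ih, smul_smul, pow_succ,
        mul_comm]
  set φ : EuclideanSpace ℂ (Fin N) := WithLp.toLp 2 ((H ^ k).mulVec ψ₀) with hφdef
  have hφ : ((H ^ k).mulVec ψ₀ : Fin N → ℂ) = ∑ j, (c j * (μ j:ℂ)^k) • (u j : Fin N → ℂ) := by
    rw [hψexp, mulVec_sum_smul]
    exact Finset.sum_congr rfl fun j _ => by rw [hpow k j, smul_smul]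
  have hφrepr : ∀ j, (inner ℂ (u j) φ : ℂ) = c j * (μ j:ℂ)^k := by
    intro j
    rw [show φ = ∑ i, (fun i => c i * (μ i:ℂ)^k) i • u i from by rw [hφdef, hφ, WithLp.toLp_sum]; rfl]
    exact honb.inner_right_fintype _ j
  -- numerator
  set n : ℝ := γ * (-E₀)^k with hn
  have hnum : ‖(inner ℂ v' φ : ℂ)‖ = n := by
    have hvφ : (inner ℂ v' φ : ℂ) = starRingEnd ℂ (a i₀) * (c i₀ * (E₀:ℂ)^k) := by
      rw [show φ = ∑ j, (c j * (μ j:ℂ)^k) • u j from by rw [hφdef, hφ, WithLp.toLp_sum]; rfl]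
      rw [inner_sum]
      simp only [inner_smul_right]
      rw [Finset.sum_eq_single i₀ (fun j _ hj => by rw [hinner_vu j, hzero j hj]; simp)
        (fun h => absurd (mem_univ i₀) h), hinner_vu i₀, hμi₀]
      ring
    rw [hvφ, norm_mul, norm_mul, Complex.norm_conj, habs1, one_mul, norm_pow,
      Complex.norm_real, Real.norm_eq_abs, abs_of_neg hE₀, hn, hγc]
  -- D
  obtain ⟨D, hDdef⟩ : ∃ D : ℝ, D = ‖φ‖ := ⟨_, rfl⟩
  have hD2 : D^2 = ∑ j, (‖c j‖)^2 * ((μ j)^2)^k := by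
    rw [hDdef, ← parseval_abs u φ]
    refine Finset.sum_congr rfl fun j _ => ?_
    rw [hφrepr j, norm_mul, norm_pow, Complex.norm_real, Real.norm_eq_abs, mul_pow, ← pow_mul,
      mul_comm k 2, pow_mul, sq_abs]
  have hn2 : n^2 = γ^2 * (E₀^2)^k := by
    rw [hn, mul_pow, ← pow_mul, mul_comm k 2, pow_mul, neg_pow]
    norm_num
  have hnpos : 0 < n := by
    have hE₀' : (0:ℝ) < -E₀ := by linarith
    rw [hn]; positivity
  have hγsq1 : γ^2 ≤ 1 := by
    rw [hγc]
    calc ‖c i₀‖^2 ≤ ∑ j, ‖c j‖^2 :=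
          Finset.single_le_sum (f := fun j => ‖c j‖^2)
            (fun j _ => by positivity) (mem_univ i₀)
      _ = 1 := hsum_c
  have hDlow : n^2 ≤ D^2 := by
    rw [hD2]
    calc n^2 = ‖c i₀‖^2 * ((μ i₀)^2)^k := by rw [hn2, hμi₀, hγc]
      _ ≤ _ := Finset.single_le_sum
          (f := fun j => ‖c j‖^2 * ((μ j)^2)^k)
          (fun j _ => by positivity) (mem_univ i₀)
  have hDpos : 0 < D := by
    have h0 : (0:ℝ) ≤ D := hDdef ▸ norm_nonneg φ
    have hn2pos : (0:ℝ) < n^2 := pow_pos hnpos 2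
    rcases h0.lt_or_eq with h | h
    · exact h
    · rw [← h] at hDlow
      norm_num at hDlow
      linarith
  have hgapj : ∀ j, j ≠ i₀ → E₁ ≤ μ j ∧ μ j < 0 := by
    intro j hj
    refine hgap (μ j) (u j) (fun h => honb.ne_zero j (congrArg (WithLp.toLp 2) h)) (heig j) ?_
    rw [hdotvu j, hzero j hj, map_zero]
  have herase : ∑ j ∈ univ.erase i₀, ‖c j‖^2 = 1 - γ^2 := by
    have h := hsum_c
    rw [← Finset.add_sum_erase _ _ (mem_univ i₀)] at h
    rw [hγc]; linarith
  have hbound : ∑ j ∈ univ.erase i₀, ‖c j‖^2 * ((μ j)^2)^k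
      ≤ (1-γ^2)*((E₁^2)^k) := by
    calc ∑ j ∈ univ.erase i₀, ‖c j‖^2 * ((μ j)^2)^k
        ≤ ∑ j ∈ univ.erase i₀, ‖c j‖^2 * (E₁^2)^k := by
          refine Finset.sum_le_sum fun j hj => ?_
          have hj' := hgapj j (Finset.ne_of_mem_erase hj)
          have hsq : (μ j)^2 ≤ E₁^2 := by nlinarith [hj'.1, hj'.2]
          exact mul_le_mul_of_nonneg_left (pow_le_pow_left₀ (sq_nonneg _) hsq k)
            (by positivity)
      _ = (1-γ^2)*((E₁^2)^k) := by rw [← Finset.sum_mul, herase]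
  have hDsplit : D^2 = n^2 + ∑ j ∈ univ.erase i₀, ‖c j‖^2*((μ j)^2)^k := by
    rw [hD2, ← Finset.add_sum_erase _ _ (mem_univ i₀)]
    congr 1
    rw [hn2, hγc, hμi₀]
  have hDup : D^2 ≤ n^2 + (1-γ^2) * (E₁^2)^k := by rw [hDsplit]; linarith
  -- final arithmetic
  set x : ℝ := (1-γ^2)/γ^2 * (E₁/E₀)^(2*k) with hx
  have hr : (0:ℝ) < E₁/E₀ := div_pos_of_neg_of_neg hE₁ hE₀
  have hx0 : 0 ≤ x := by
    have h1 : (0:ℝ) ≤ 1 - γ^2 := by linarith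
    rw [hx]; positivity
  have hepow : (E₁/E₀)^(2*k) = (E₁^2)^k / (E₀^2)^k := by
    rw [div_pow, pow_mul, pow_mul]
  have hγne : γ ≠ 0 := ne_of_gt hγpos
  have hE₀ne : E₀ ≠ 0 := ne_of_lt hE₀
  have hid : n^2 * x = (1-γ^2)*((E₁^2)^k) := by
    have hE₀pk : ((E₀:ℝ)^2)^k ≠ 0 := by positivity
    rw [hn2, hx, hepow]
    field_simp
  have hkey : D^2 ≤ n^2 * (1+x) := by rw [mul_add, mul_one, hid]; linarith
  have hfin := aux_ineq n D x hnpos hDpos hx0 hkey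
  have hrhs : ((1 - γ^2)/(2*γ^2)) * (E₁/E₀)^(2*k) = x/2 := by
    rw [hx]; ring
  rw [dot_eq_inner]
  show 1 - ‖(inner ℂ v' φ : ℂ)‖ / vecNorm (φ : Fin N → ℂ)
    ≤ ((1 - γ ^ 2) / (2 * γ ^ 2)) * (E₁ / E₀) ^ (2 * k)
  rw [hnum, vecNorm_eq_norm φ, ← hDdef, hrhs]
  exact hfin
end

section
/- Let H be a Hermitian operator with negative spectrum, gap Δ ≤ E₁ − E₀, first excited energy E₁ < 0, observable O, trial overlap γ := |⟨E₀|ψ₀⟩| > 0, and error ε ≤ 4‖O‖√(1−γ²)/γ. If k ≥ (1/2) · log(2γ²ε²/(8‖O‖²(1−γ²))) / log(1 − Δ/|E₀|), then |⟨ψ₀|H^k O H^k|ψ₀⟩/‖H^k|ψ₀⟩‖² − ⟨E₀|O|E₀⟩| ≤ ε. -/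
open Matrix
open scoped Matrix.Norms.L2Operator
open scoped ComplexInnerProductSpace

namespace S14
variable {N : ℕ}

noncomputable def toE (x : Fin N → ℂ) : EuclideanSpace ℂ (Fin N) := WithLp.toLp 2 x

lemma inner_toE (x y : Fin N → ℂ) : ⟪toE x, toE y⟫ = star x ⬝ᵥ y := by
  simp [toE, dotProduct, PiLp.inner_apply, mul_comm]

lemma vecNorm_toE (x : Fin N → ℂ) : vecNorm x = ‖toE x‖ := by
  rw [vecNorm, ← inner_toE, inner_self_eq_norm_sq_to_K]
  simp [← Complex.ofReal_pow, Real.sqrt_sq (norm_nonneg _)]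

lemma toE_smul (c : ℂ) (x : Fin N → ℂ) : toE (c • x) = c • toE x := rfl
lemma toE_sub (x y : Fin N → ℂ) : toE (x - y) = toE x - toE y := rfl

lemma opnorm_mulVec (O : Matrix (Fin N) (Fin N) ℂ) (x : Fin N → ℂ) :
    ‖toE (O *ᵥ x)‖ ≤ ‖O‖ * ‖toE x‖ := O.l2_opNorm_mulVec (toE x)

lemma expect_bound (O : Matrix (Fin N) (Fin N) ℂ) (x y : Fin N → ℂ)
    (hx : ‖toE x‖ = 1) (hy : ‖toE y‖ = 1) :
    ‖star x ⬝ᵥ (O *ᵥ x) - star y ⬝ᵥ (O *ᵥ y)‖ ≤ 2 * ‖O‖ * ‖toE x - toE y‖ := by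
  have key : star x ⬝ᵥ (O *ᵥ x) - star y ⬝ᵥ (O *ᵥ y)
      = ⟪toE x - toE y, toE (O *ᵥ x)⟫ + ⟪toE y, toE (O *ᵥ x) - toE (O *ᵥ y)⟫ := by
    simp only [inner_sub_left, inner_sub_right, inner_toE]
    ring
  rw [key]
  calc ‖⟪toE x - toE y, toE (O *ᵥ x)⟫ + ⟪toE y, toE (O *ᵥ x) - toE (O *ᵥ y)⟫‖
      ≤ ‖⟪toE x - toE y, toE (O *ᵥ x)⟫‖ + ‖⟪toE y, toE (O *ᵥ x) - toE (O *ᵥ y)⟫‖ :=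
        norm_add_le _ _
    _ ≤ ‖toE x - toE y‖ * ‖toE (O *ᵥ x)‖ + ‖toE y‖ * ‖toE (O *ᵥ x) - toE (O *ᵥ y)‖ := by
        gcongr <;> exact norm_inner_le_norm _ _
    _ ≤ ‖toE x - toE y‖ * (‖O‖ * 1) + 1 * (‖O‖ * ‖toE x - toE y‖) := by
        gcongr
        · rw [← hx]; exact opnorm_mulVec O x
        · rw [hy]
        · rw [← toE_sub, ← Matrix.mulVec_sub]
          calc ‖toE (O *ᵥ (x - y))‖ ≤ ‖O‖ * ‖toE (x - y)‖ := opnorm_mulVec O _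
          _ = ‖O‖ * ‖toE x - toE y‖ := by rw [toE_sub]
    _ = 2 * ‖O‖ * ‖toE x - toE y‖ := by ring

lemma norm_sq_sum (b : OrthonormalBasis (Fin N) ℂ (EuclideanSpace ℂ (Fin N)))
    (x : Fin N → ℂ) :
    ‖toE x‖ ^ 2 = ∑ i, ‖star (b i : Fin N → ℂ) ⬝ᵥ x‖ ^ 2 := by
  rw [← b.repr.norm_map (toE x), EuclideanSpace.norm_eq,
    Real.sq_sqrt (Finset.sum_nonneg fun i _ => sq_nonneg _)]
  refine Finset.sum_congr rfl fun i _ => ?_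
  rw [b.repr_apply_apply, show b i = toE (b i : Fin N → ℂ) from rfl, inner_toE]
  rfl

lemma sq_le_sq_of_between {x y : ℝ} (h1 : y ≤ x) (h2 : x < 0) : x^2 ≤ y^2 := by
  nlinarith

lemma sq_le_of_abs_le {x c y : ℝ} (hx : 0 ≤ x) (h : x ≤ c * y) : x^2 ≤ c^2 * y^2 := by
  nlinarith

lemma final_arith {no d e : ℝ} (hno : 0 < no) (he : 0 < e) (hd : 0 ≤ d)
    (h4 : 4*no^2*d^2 ≤ e^2) : 2*no*d ≤ e := by
  nlinarith [sq_nonneg (2*no*d - e)]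

end S14

open S14

set_option maxHeartbeats 1000000 in
/-- power method for ground state property estimation: for Hermitian H with
negative spectrum, ground eigenvalue E₀ < E₁ < 0, gap Δ ≤ E₁ − E₀, ground eigenvector v,
trial overlap γ > 0, observable O, and ε ≤ 4‖O‖√(1−γ²)/γ, if
k ≥ (1/2)·log(2γ²ε²/(8‖O‖²(1−γ²)))/log(1 − Δ/|E₀|) then
|⟨ψ₀|H^k O H^k|ψ₀⟩/‖H^k ψ₀‖² − ⟨E₀|O|E₀⟩| ≤ ε. -/
theorem stmt_14 {N : ℕ} (H : Matrix (Fin N) (Fin N) ℂ) (hH : H.IsHermitian)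
    (O : Matrix (Fin N) (Fin N) ℂ)
    (E₀ E₁ Δ γ ε : ℝ) (hE₀ : E₀ < 0) (hE₁ : E₁ < 0) (hE₀₁ : E₀ < E₁)
    (hΔpos : 0 < Δ) (hΔ : Δ ≤ E₁ - E₀)
    (v : Fin N → ℂ) (hv : vecNorm v = 1) (hEv : H.mulVec v = (E₀ : ℂ) • v)
    (hgap : ∀ (μ : ℝ) (w : Fin N → ℂ), w ≠ 0 → H.mulVec w = (μ : ℂ) • w →
      star v ⬝ᵥ w = 0 → E₁ ≤ μ ∧ μ < 0)
    (ψ₀ : Fin N → ℂ) (hψ₀ : vecNorm ψ₀ = 1)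
    (hγ : γ = ‖star v ⬝ᵥ ψ₀‖) (hγpos : 0 < γ)
    (hε : 0 < ε) (hεub : ε ≤ 4 * ‖O‖ * Real.sqrt (1 - γ ^ 2) / γ)
    (k : ℕ)
    (hk : (1 / 2) * Real.log (2 * γ ^ 2 * ε ^ 2 / (8 * ‖O‖ ^ 2 * (1 - γ ^ 2)))
            / Real.log (1 - Δ / |E₀|) ≤ (k : ℝ)) :
    ‖(star ψ₀ ⬝ᵥ (H ^ k * O * H ^ k).mulVec ψ₀)
        / ((vecNorm ((H ^ k).mulVec ψ₀) : ℝ) : ℂ) ^ 2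
      - star v ⬝ᵥ O.mulVec v‖ ≤ ε := by
  classical
  -- edge cases
  have hO : 0 < ‖O‖ := by
    rcases lt_or_eq_of_le (norm_nonneg O) with h | h
    · exact h
    · exfalso; rw [← h] at hεub; simp at hεub; linarith
  have hγ1 : γ < 1 := by
    by_contra h
    push_neg at h
    have hs : Real.sqrt (1 - γ^2) = 0 := by
      rw [Real.sqrt_eq_zero']; nlinarith
    rw [hs, mul_zero, zero_div] at hεub
    linarith
  have hγ2 : 0 < 1 - γ^2 := by nlinarith
  -- eigenbasis setup
  set b := hH.eigenvectorBasis with hbdef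
  set μ := hH.eigenvalues with hμdef
  set bv : Fin N → Fin N → ℂ := fun i => b i with hbvdef
  have heig : ∀ i, H *ᵥ bv i = ((μ i : ℂ)) • bv i := by
    intro i
    have h2 : H *ᵥ bv i = μ i • bv i := hH.mulVec_eigenvectorBasis i
    rw [h2]; ext j; simp [Complex.real_smul]
  have heigk : ∀ (m : ℕ) i, (H ^ m) *ᵥ bv i = ((μ i : ℂ) ^ m) • bv i := by
    intro m
    induction m with
    | zero => intro i; simp [Matrix.one_mulVec]
    | succ m ih =>
      intro i
      rw [pow_succ, ← Matrix.mulVec_mulVec, heig i, Matrix.mulVec_smul, ih i,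
        smul_smul, pow_succ]
      ring_nf
  have hHk : (H ^ k).IsHermitian := hH.pow k
  have hdotk : ∀ x y : Fin N → ℂ, star ((H^k) *ᵥ x) ⬝ᵥ y = star x ⬝ᵥ ((H^k) *ᵥ y) := by
    intro x y
    rw [Matrix.star_mulVec, hHk.eq, ← Matrix.dotProduct_mulVec]
  have hvnorm : ‖toE v‖ = 1 := by rw [← vecNorm_toE]; exact hv
  have hψnorm : ‖toE ψ₀‖ = 1 := by rw [← vecNorm_toE]; exact hψ₀
  have hvv : star v ⬝ᵥ v = 1 := by
    have h2 := inner_self_eq_norm_sq_to_K (𝕜 := ℂ) (toE v)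
    rw [hvnorm] at h2
    rw [← inner_toE]; rw [h2]; norm_num
  have hvH : ∀ w, star v ⬝ᵥ (H *ᵥ w) = (E₀:ℂ) * (star v ⬝ᵥ w) := by
    intro w
    have h1 : star v ᵥ* H = star (H *ᵥ v) := by rw [Matrix.star_mulVec, hH.eq]
    rw [Matrix.dotProduct_mulVec, h1, hEv]
    simp [star_smul, smul_dotProduct, Complex.conj_ofReal]
  have hvHk : ∀ (m : ℕ) (w : Fin N → ℂ),
      star v ⬝ᵥ ((H ^ m) *ᵥ w) = (E₀:ℂ)^m * (star v ⬝ᵥ w) := by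
    intro m
    induction m with
    | zero => intro w; simp [Matrix.one_mulVec]
    | succ m ih =>
      intro w
      rw [pow_succ, ← Matrix.mulVec_mulVec, ih, hvH, pow_succ]
      ring
  -- coordinates
  set c : Fin N → ℂ := fun i => star v ⬝ᵥ bv i with hcdef
  set a : Fin N → ℂ := fun i => star (bv i) ⬝ᵥ ψ₀ with hadef
  set g : ℂ := star v ⬝ᵥ ψ₀ with hgdef
  set φ : Fin N → ℂ := (H ^ k) *ᵥ ψ₀ with hφdef
  have hconj : ∀ x y : Fin N → ℂ, star x ⬝ᵥ y = (starRingEnd ℂ) (star y ⬝ᵥ x) := by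
    intro x y
    rw [← inner_toE, ← inner_toE]; exact (inner_conj_symm (toE x) (toE y)).symm
  -- classification
  have hmuE0 : ∀ i, c i ≠ 0 → μ i = E₀ := by
    intro i hne
    have h1 := hvH (bv i)
    rw [heig i, dotProduct_smul] at h1
    have h2 : ((μ i : ℂ) - (E₀:ℂ)) * c i = 0 := by
      have h1' : (μ i : ℂ) * c i = (E₀:ℂ) * c i := by simpa [smul_eq_mul] using h1
      linear_combination h1'
    rcases mul_eq_zero.mp h2 with h | h
    · have := sub_eq_zero.mp h; exact_mod_cast this
    · exact absurd h hne
  have hbvne : ∀ i, bv i ≠ 0 := by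
    intro i h
    have : (b i : EuclideanSpace ℂ (Fin N)) = 0 := (WithLp.ofLp_eq_zero 2).mp h
    exact b.orthonormal.ne_zero i this
  have hpar : ∀ i, c i ≠ 0 → bv i = c i • v := by
    intro i hne
    by_contra hw
    have hw0 : bv i - c i • v ≠ 0 := fun h => hw (by rwa [sub_eq_zero] at h)
    have hEw : H *ᵥ (bv i - c i • v) = ((E₀:ℝ):ℂ) • (bv i - c i • v) := by
      rw [Matrix.mulVec_sub, heig i, Matrix.mulVec_smul, hEv, hmuE0 i hne,
        smul_sub, smul_smul, smul_smul]
      ring_nf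
    have hworth : star v ⬝ᵥ (bv i - c i • v) = 0 := by
      rw [dotProduct_sub, dotProduct_smul, hvv]
      simp [hcdef]
    have := (hgap E₀ _ hw0 hEw hworth).1
    linarith
  have horthgap : ∀ i, c i = 0 → E₁ ≤ μ i ∧ μ i < 0 := by
    intro i h0
    exact hgap (μ i) (bv i) (hbvne i) (heig i) h0
  -- sums
  have htot : ∑ i, ‖a i‖ ^ 2 = 1 := by
    have := norm_sq_sum b ψ₀
    rw [hψnorm] at this
    simpa using this.symm
  have hvtot : ∑ i, ‖c i‖ ^ 2 = 1 := by
    have h := norm_sq_sum b v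
    rw [hvnorm, one_pow] at h
    rw [h]
    refine Finset.sum_congr rfl fun i _ => ?_
    rw [show c i = star v ⬝ᵥ bv i from rfl, hconj v (bv i), Complex.norm_conj]
  set T : Finset (Fin N) := Finset.univ.filter (fun i => c i ≠ 0) with hTdef
  have hsplit : ∀ f : Fin N → ℝ, (∑ i ∈ T, f i) + (∑ i ∈ Finset.univ.filter (fun i => ¬ (c i ≠ 0)), f i) = ∑ i, f i :=
    fun f => Finset.sum_filter_add_sum_filter_not Finset.univ _ f
  have hcT : ∑ i ∈ T, ‖c i‖ ^ 2 = 1 := by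
    rw [← hvtot, ← hsplit (fun i => ‖c i‖ ^ 2)]
    have : ∑ i ∈ Finset.univ.filter (fun i => ¬ (c i ≠ 0)), ‖c i‖ ^ 2 = 0 := by
      apply Finset.sum_eq_zero
      intro i hi
      rw [Finset.mem_filter] at hi
      push_neg at hi
      rw [hi.2]; simp
    rw [this, add_zero]
  have haT : ∀ i ∈ T, a i = (starRingEnd ℂ) (c i) * g := by
    intro i hi
    rw [Finset.mem_filter] at hi
    rw [hadef]; simp only
    rw [hpar i hi.2, star_smul, smul_dotProduct]
    rfl
  have hsumT : ∑ i ∈ T, ‖a i‖ ^ 2 = γ^2 := by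
    have : ∀ i ∈ T, ‖a i‖ ^ 2 = ‖c i‖ ^ 2 * γ^2 := by
      intro i hi
      rw [haT i hi, norm_mul, mul_pow, Complex.norm_conj, hγ]
    rw [Finset.sum_congr rfl this, ← Finset.sum_mul, hcT, one_mul]
  have hsumTc : ∑ i ∈ Finset.univ.filter (fun i => ¬ (c i ≠ 0)), ‖a i‖ ^ 2 = 1 - γ^2 := by
    have := hsplit (fun i => ‖a i‖ ^ 2)
    rw [htot, hsumT] at this
    linarith
  -- φ coordinates and norm
  have hφcoord : ∀ i, star (bv i) ⬝ᵥ φ = ((μ i : ℂ))^k * a i := by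
    intro i
    rw [hφdef, ← hdotk, heigk k i, star_smul, smul_dotProduct]
    simp [smul_eq_mul, star_pow, Complex.star_def, Complex.conj_ofReal, hadef]
  have hnφ : ‖toE φ‖^2 = ∑ i, (μ i ^ k)^2 * ‖a i‖^2 := by
    rw [norm_sq_sum b φ]
    refine Finset.sum_congr rfl fun i _ => ?_
    rw [show star (b i : Fin N → ℂ) ⬝ᵥ φ = star (bv i) ⬝ᵥ φ from rfl, hφcoord i,
      norm_mul, mul_pow, norm_pow, Complex.norm_real, Real.norm_eq_abs, ← abs_pow, sq_abs]
  -- split the norm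
  have hTmu : ∀ i ∈ T, (μ i ^ k)^2 * ‖a i‖^2 = (E₀^k)^2 * ‖a i‖^2 := by
    intro i hi
    rw [Finset.mem_filter] at hi
    rw [hmuE0 i hi.2]
  set B : ℝ := ∑ i ∈ Finset.univ.filter (fun i => ¬ (c i ≠ 0)), (μ i ^ k)^2 * ‖a i‖^2 with hBdef
  have hB0 : 0 ≤ B := Finset.sum_nonneg fun i _ => mul_nonneg (sq_nonneg _) (sq_nonneg _)
  have hBle : B ≤ (E₁^k)^2 * (1 - γ^2) := by
    rw [hBdef, ← hsumTc, Finset.mul_sum]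
    apply Finset.sum_le_sum
    intro i hi
    rw [Finset.mem_filter] at hi
    have h0 : c i = 0 := by
      have := hi.2; push_neg at this; exact this
    obtain ⟨h1, h2⟩ := horthgap i h0
    have hmu2 : (μ i)^2 ≤ E₁^2 := sq_le_sq_of_between h1 h2
    have hpk : (μ i ^ k)^2 ≤ (E₁^k)^2 := by
      calc (μ i ^ k)^2 = ((μ i)^2)^k := by ring
        _ ≤ (E₁^2)^k := pow_le_pow_left₀ (sq_nonneg _) hmu2 k
        _ = (E₁^k)^2 := by ring
    exact mul_le_mul_of_nonneg_right hpk (sq_nonneg _)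
  have hnφ2 : ‖toE φ‖^2 = (E₀^k)^2 * γ^2 + B := by
    rw [hnφ, ← hsplit (fun i => (μ i ^ k)^2 * ‖a i‖^2)]
    congr 1
    rw [Finset.sum_congr rfl hTmu, ← Finset.mul_sum, hsumT]
  have hE₀ne : E₀ ≠ 0 := ne_of_lt hE₀
  set P : ℝ := |E₀|^k with hPdef
  set A : ℝ := γ * P with hAdef
  have hP0 : 0 < P := pow_pos (abs_pos.mpr hE₀ne) k
  have hA0 : 0 < A := mul_pos hγpos hP0
  have hA2 : A^2 = (E₀^k)^2 * γ^2 := by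
    rw [hAdef, hPdef]
    rw [mul_pow, ← abs_pow, sq_abs]
    ring
  set r : ℝ := ‖toE φ‖ with hrdef
  have hr2 : r^2 = A^2 + B := by rw [hA2, hrdef, hnφ2]
  have hrnn : 0 ≤ r := norm_nonneg _
  have hA2pos : 0 < A^2 := by positivity
  have hr2pos : 0 < r^2 := by rw [hr2]; linarith
  have hr0 : 0 < r := by
    rcases eq_or_lt_of_le hrnn with h | h
    · exfalso; rw [← h] at hr2pos; simp at hr2pos
    · exact h
  have hAr : A ≤ r := by
    by_contra hcon
    push_neg at hcon
    have h1 : r^2 < A^2 := by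
      have h2 := mul_self_lt_mul_self hrnn hcon
      simpa [pow_two] using h2
    rw [hr2] at h1
    linarith
  -- overlap
  have hvφ : star v ⬝ᵥ φ = (E₀:ℂ)^k * g := hvHk k ψ₀
  -- normalized and phase-adjusted vectors
  set s : ℂ := ((r:ℝ):ℂ)⁻¹ with hsdef
  set ψ : Fin N → ℂ := s • φ with hψdef
  have hrC : ((r:ℝ):ℂ) ≠ 0 := Complex.ofReal_ne_zero.mpr (ne_of_gt hr0)
  have hψn : ‖toE ψ‖ = 1 := by
    rw [show toE ψ = s • toE φ from rfl, norm_smul, hsdef, ← hrdef]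
    simp [abs_of_pos hr0]
    field_simp
  set z : ℂ := (E₀:ℂ)^k * g with hzdef
  have hzabs : ‖z‖ = A := by
    rw [hzdef, norm_mul, norm_pow, Complex.norm_real, Real.norm_eq_abs, ← hγ, hAdef, hPdef]
    ring
  have hAC : ((A:ℝ):ℂ) ≠ 0 := Complex.ofReal_ne_zero.mpr (ne_of_gt hA0)
  set cph : ℂ := z / ((A:ℝ):ℂ) with hcphdef
  set u : Fin N → ℂ := cph • v with hudef
  have hcph : ‖cph‖ = 1 := by
    rw [hcphdef, norm_div, hzabs, Complex.norm_real, Real.norm_eq_abs, abs_of_pos hA0, div_self (ne_of_gt hA0)]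
  have hun : ‖toE u‖ = 1 := by
    rw [show toE u = cph • toE v from rfl, norm_smul, hvnorm]
    simp [hcph]
  have hcc : (starRingEnd ℂ) cph * cph = 1 := by
    have h1 : (starRingEnd ℂ) cph * cph = (Complex.normSq cph : ℂ) := by
      rw [Complex.normSq_eq_conj_mul_self]
    rw [h1, Complex.normSq_eq_norm_sq, hcph]
    norm_num
  have hzz : (starRingEnd ℂ) z * z = (((A^2 : ℝ)) : ℂ) := by
    have h1 : (starRingEnd ℂ) z * z = (Complex.normSq z : ℂ) := by
      rw [Complex.normSq_eq_conj_mul_self]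
    rw [h1, Complex.normSq_eq_norm_sq, hzabs]
  have hccs : star cph * cph = 1 := hcc
  have hinner : star u ⬝ᵥ ψ = ((A / r : ℝ) : ℂ) := by
    rw [hudef, hψdef, star_smul, smul_dotProduct, dotProduct_smul,
      hvφ, smul_eq_mul, smul_eq_mul]
    have hconjcph : star cph = (starRingEnd ℂ) z / ((A:ℝ):ℂ) := by
      rw [show (star cph : ℂ) = (starRingEnd ℂ) cph from rfl, hcphdef, map_div₀,
        Complex.conj_ofReal]
    rw [hconjcph, hsdef]
    rw [show (starRingEnd ℂ) z / ((A:ℝ):ℂ) * ((((r:ℝ):ℂ))⁻¹ * z)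
        = ((starRingEnd ℂ) z * z) / ((A:ℝ):ℂ) * (((r:ℝ):ℂ))⁻¹ by ring, hzz]
    rw [Complex.ofReal_div]
    field_simp
    push_cast
    ring
  have huu : star u ⬝ᵥ u = 1 := by
    rw [hudef, star_smul, smul_dotProduct, dotProduct_smul, hvv,
      smul_eq_mul, smul_eq_mul, mul_one, hccs]
  have hψψ : star ψ ⬝ᵥ ψ = 1 := by
    have h2 := inner_self_eq_norm_sq_to_K (𝕜 := ℂ) (toE ψ)
    rw [hψn] at h2
    rw [← inner_toE, h2]
    norm_num
  have hd2 : ‖toE ψ - toE u‖^2 = 2 - 2*(A/r) := by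
    have hdd : ⟪toE ψ - toE u, toE ψ - toE u⟫ = ((2 - 2*(A/r) : ℝ) : ℂ) := by
      simp only [inner_sub_left, inner_sub_right, inner_toE]
      rw [hψψ, huu, hinner, hconj ψ u, hinner, Complex.conj_ofReal]
      push_cast
      ring
    have h3 := inner_self_eq_norm_sq_to_K (𝕜 := ℂ) (toE ψ - toE u)
    rw [hdd] at h3
    rw [← Complex.ofReal_inj, Complex.ofReal_pow]
    exact h3.symm
  -- rewrite the goal
  have hgoal1 : star ψ₀ ⬝ᵥ ((H ^ k * O * H ^ k) *ᵥ ψ₀) = star φ ⬝ᵥ (O *ᵥ φ) := by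
    rw [← Matrix.mulVec_mulVec, ← Matrix.mulVec_mulVec, ← hdotk, hφdef]
  have hgoal2 : star u ⬝ᵥ (O *ᵥ u) = star v ⬝ᵥ (O *ᵥ v) := by
    rw [hudef, Matrix.mulVec_smul, star_smul, smul_dotProduct, dotProduct_smul,
      smul_eq_mul, smul_eq_mul, ← mul_assoc, hccs, one_mul]
  have hgoal3 : star ψ ⬝ᵥ (O *ᵥ ψ) = (star ψ₀ ⬝ᵥ ((H ^ k * O * H ^ k) *ᵥ ψ₀)) / ((r:ℝ):ℂ)^2 := by
    rw [hψdef, Matrix.mulVec_smul, star_smul, smul_dotProduct, dotProduct_smul,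
      smul_eq_mul, smul_eq_mul, hgoal1, hsdef]
    have hcs : star ((((r:ℝ):ℂ))⁻¹) = (((r:ℝ):ℂ))⁻¹ := by
      rw [show (star ((((r:ℝ):ℂ))⁻¹) : ℂ) = (starRingEnd ℂ) ((((r:ℝ):ℂ))⁻¹) from rfl,
        map_inv₀, Complex.conj_ofReal]
    rw [hcs, div_eq_mul_inv, pow_two, mul_inv]
    ring
  have hvecnorm : vecNorm ((H ^ k).mulVec ψ₀) = r := by
    rw [show (H ^ k).mulVec ψ₀ = φ from hφdef.symm, vecNorm_toE, hrdef]
  rw [hvecnorm, ← hgoal3, ← hgoal2]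
  -- numeric bounds
  have h1x : 1 - A/r ≤ B/(2*A^2) := by
    have hBeq : B = (r - A) * (r + A) := by linear_combination -hr2
    have hkey : (r - A) * (2*A^2) ≤ B * r := by
      rw [hBeq]
      have h2 : 2*A^2 ≤ (r+A)*r := by
        have h2a : A*A ≤ A*r := mul_le_mul_of_nonneg_left hAr hA0.le
        have h2b : A^2 ≤ r^2 := by rw [hr2]; linarith
        have h2c : (r+A)*r = r^2 + A*r := by ring
        rw [h2c]
        linarith [h2a, h2b]
      calc (r - A) * (2*A^2) ≤ (r - A) * ((r+A)*r) :=
            mul_le_mul_of_nonneg_left h2 (by linarith)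
        _ = (r - A)*(r + A)*r := by ring
    have heq : 1 - A/r = (r - A)/r := by field_simp
    rw [heq, div_le_div_iff₀ hr0 (by positivity)]
    linarith
  -- the log computation
  set r0 : ℝ := 1 - Δ / |E₀| with hr0def
  have habsE₀ : |E₀| = -E₀ := abs_of_neg hE₀
  have hE₀pos' : (0:ℝ) < -E₀ := by linarith
  have hr0pos : 0 < r0 := by
    rw [hr0def, habsE₀]
    have h1 : Δ / (-E₀) < 1 := by rw [div_lt_one hE₀pos']; linarith
    linarith
  have hr0lt1 : r0 < 1 := by
    have h1 : 0 < Δ / |E₀| := div_pos hΔpos (by rw [habsE₀]; linarith)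
    rw [hr0def]; linarith
  have hL : Real.log r0 < 0 := Real.log_neg hr0pos hr0lt1
  have hA₀pos : 0 < 2*γ^2*ε^2/(8*‖O‖^2*(1-γ^2)) := by positivity
  have hklog : (k:ℝ) * Real.log r0 ≤ (1/2) * Real.log (2*γ^2*ε^2/(8*‖O‖^2*(1-γ^2))) := by
    rw [div_le_iff_of_neg hL] at hk
    exact hk
  have hpow : r0^(2*k) ≤ 2*γ^2*ε^2/(8*‖O‖^2*(1-γ^2)) := by
    have h1 : Real.log (r0^(2*k)) ≤ Real.log (2*γ^2*ε^2/(8*‖O‖^2*(1-γ^2))) := by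
      rw [Real.log_pow]
      push_cast
      linarith [hklog]
    calc r0^(2*k) = Real.exp (Real.log (r0^(2*k))) := (Real.exp_log (pow_pos hr0pos _)).symm
      _ ≤ Real.exp (Real.log (2*γ^2*ε^2/(8*‖O‖^2*(1-γ^2)))) := Real.exp_le_exp.mpr h1
      _ = 2*γ^2*ε^2/(8*‖O‖^2*(1-γ^2)) := Real.exp_log hA₀pos
  have hE1r : E₁^2 ≤ r0^2 * E₀^2 := by
    have h1 : -E₁ ≤ r0 * (-E₀) := by
      rw [hr0def, habsE₀]
      have h2 : (1 - Δ/(-E₀)) * (-E₀) = -E₀ - Δ := by field_simp; ring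
      rw [h2]; linarith
    have h3 : (-E₁)^2 ≤ (r0 * (-E₀))^2 := by
      have h2 := mul_self_le_mul_self (by linarith : (0:ℝ) ≤ -E₁) h1
      calc (-E₁)^2 = (-E₁) * (-E₁) := by ring
        _ ≤ (r0 * (-E₀)) * (r0 * (-E₀)) := h2
        _ = (r0 * (-E₀))^2 := by ring
    calc E₁^2 = (-E₁)^2 := by ring
      _ ≤ (r0 * (-E₀))^2 := h3
      _ = r0^2 * E₀^2 := by ring
  have hconvp : ∀ x : ℝ, x^(2*k) = (x^k)^2 := fun x => by rw [mul_comm, pow_mul]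
  have hEk0 : E₁^(2*k) ≤ r0^(2*k) * E₀^(2*k) := by
    calc E₁^(2*k) = (E₁^2)^k := by rw [pow_mul]
      _ ≤ (r0^2 * E₀^2)^k := pow_le_pow_left₀ (sq_nonneg _) hE1r k
      _ = r0^(2*k) * E₀^(2*k) := by rw [mul_pow, ← pow_mul, ← pow_mul]
  have hEk : (E₁^k)^2 ≤ r0^(2*k) * (E₀^k)^2 := by
    rw [show ((E₁^k)^2:ℝ) = E₁^(2*k) from (hconvp E₁).symm,
      show ((E₀^k)^2:ℝ) = E₀^(2*k) from (hconvp E₀).symm]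
    exact hEk0
  have hE₀k2 : (0:ℝ) < (E₀^k)^2 := by
    have h1 : E₀^k ≠ 0 := pow_ne_zero k hE₀ne
    positivity
  have hγne : γ ≠ 0 := ne_of_gt hγpos
  have hγ2ne : (1:ℝ) - γ^2 ≠ 0 := ne_of_gt hγ2
  have hOne : ‖O‖ ≠ 0 := ne_of_gt hO
  have hfinal : (E₁^k)^2 * (1-γ^2) / (2*A^2) ≤ ε^2/(8*‖O‖^2) := by
    have step1 : (E₁^k)^2 * (1-γ^2) / (2*A^2) ≤ (r0^(2*k) * (E₀^k)^2) * (1-γ^2) / (2*A^2) := by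
      gcongr
    have step2 : (r0^(2*k) * (E₀^k)^2) * (1-γ^2) / (2*A^2) = (1-γ^2)/(2*γ^2) * r0^(2*k) := by
      rw [hA2]
      field_simp
    have step3 : (1-γ^2)/(2*γ^2) * r0^(2*k)
        ≤ (1-γ^2)/(2*γ^2) * (2*γ^2*ε^2/(8*‖O‖^2*(1-γ^2))) := by
      have hnn : 0 ≤ (1-γ^2)/(2*γ^2) := by positivity
      exact mul_le_mul_of_nonneg_left hpow hnn
    have step4 : (1-γ^2)/(2*γ^2) * (2*γ^2*ε^2/(8*‖O‖^2*(1-γ^2))) = ε^2/(8*‖O‖^2) := by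
      field_simp
    linarith
  have hover : 1 - A/r ≤ ε^2/(8*‖O‖^2) := by
    have hBdiv : B/(2*A^2) ≤ (E₁^k)^2*(1-γ^2)/(2*A^2) := by gcongr
    linarith
  have hdle : ‖toE ψ - toE u‖^2 ≤ ε^2/(4*‖O‖^2) := by
    rw [hd2]
    have h1 : 2*(ε^2/(8*‖O‖^2)) = ε^2/(4*‖O‖^2) := by ring
    linarith
  calc ‖star ψ ⬝ᵥ (O *ᵥ ψ) - star u ⬝ᵥ (O *ᵥ u)‖
      ≤ 2 * ‖O‖ * ‖toE ψ - toE u‖ := expect_bound O ψ u hψn hun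
    _ ≤ ε := by
      have h4 : 4*‖O‖^2*‖toE ψ - toE u‖^2 ≤ ε^2 := by
        have := mul_le_mul_of_nonneg_left hdle (le_of_lt (by positivity : (0:ℝ) < 4*‖O‖^2))
        calc 4*‖O‖^2*‖toE ψ - toE u‖^2 ≤ 4*‖O‖^2*(ε^2/(4*‖O‖^2)) := this
          _ = ε^2 := by field_simp
      exact final_arith hO hε (norm_nonneg _) (by linarith [h4])
end
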